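/- Uniform moment bound from linear moment growth plus algebraic L¹ relaxation. Let N ≥ 1, s > 2, and let M : ℝ^N → [0,∞) be measurable with ‖M‖_{L¹_{2s}} < ∞. Suppose g : [0,∞) → (measurable functions ℝ^N → [0,∞)) satisfies, for some constants C₀, C₁ > 0 and all t ≥ 0: ‖g(t)‖_{L¹_{2s}} ≤ C₀(1+t) and ‖g(t) − M‖_{L¹} ≤ C₁(1+t)^{−1}. Then for all t ≥ 0: ‖g(t)‖_{L¹_s} ≤ ‖M‖_{L¹_s} + C₁^{1/2} (C₀ + ‖M‖_{L¹_{2s}})^{1/2}; in particular sup_{t ≥ 0} ‖g(t)‖_{L¹_s} < ∞. -/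

import Mathlib

open MeasureTheory Real ENNReal

noncomputable section

/-- Euclidean space `ℝ^N`. -/
abbrev Rn (N : ℕ) := EuclideanSpace ℝ (Fin N)

/-- Weighted norm `‖f‖_{L¹_s} = ∫ |f(v)| (1+|v|²)^{s/2} dv`, valued in `[0,∞]`. -/
def L1s (N : ℕ) (s : ℝ) (f : Rn N → ℝ) : ℝ≥0∞ :=
  ∫⁻ v : Rn N, ENNReal.ofReal (|f v| * (1 + ‖v‖ ^ 2) ^ (s / 2))

section Aux

variable {N : ℕ} {s : ℝ}

lemma one_le_base (v : Rn N) : (1 : ℝ) ≤ 1 + ‖v‖ ^ 2 :=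
  le_add_of_nonneg_right (by positivity)

lemma wt_pos (s : ℝ) (v : Rn N) : 0 < (1 + ‖v‖ ^ 2) ^ (s / 2) :=
  Real.rpow_pos_of_pos (by positivity) _

lemma wt_meas (s : ℝ) : Measurable fun v : Rn N => (1 + ‖v‖ ^ 2) ^ (s / 2) := by
  have : Continuous fun v : Rn N => (1 + ‖v‖ ^ 2) ^ (s / 2) := by
    apply Continuous.rpow_const (by continuity)
    intro v; left; positivity
  exact this.measurable

/-- Triangle-type bound for `L1s`. -/
lemma L1s_le_add {N : ℕ} (s : ℝ) {f h₁ h₂ : Rn N → ℝ} (hm : Measurable h₁)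
    (hpt : ∀ v, |f v| ≤ |h₁ v| + |h₂ v|) :
    L1s N s f ≤ L1s N s h₁ + L1s N s h₂ := by
  unfold L1s
  rw [← lintegral_add_left (f := fun v => ENNReal.ofReal (|h₁ v| * (1 + ‖v‖ ^ 2) ^ (s / 2)))
    ((hm.abs.mul (wt_meas s)).ennreal_ofReal)]
  refine lintegral_mono fun v => ?_
  rw [← ENNReal.ofReal_add (by positivity) (by positivity), ← add_mul]
  exact ENNReal.ofReal_le_ofReal
    (mul_le_mul_of_nonneg_right (hpt v) (wt_pos s v).le)

/-- Monotonicity of `L1s` in the weight exponent. -/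
lemma L1s_mono_exp {N : ℕ} {s s' : ℝ} (hss' : s ≤ s') (f : Rn N → ℝ) :
    L1s N s f ≤ L1s N s' f := by
  refine lintegral_mono fun v => ENNReal.ofReal_le_ofReal ?_
  refine mul_le_mul_of_nonneg_left ?_ (abs_nonneg _)
  exact Real.rpow_le_rpow_of_exponent_le (one_le_base v) (by linarith)

/-- Cauchy–Schwarz interpolation for weighted norms. -/
lemma L1s_CS {N : ℕ} (s : ℝ) {f : Rn N → ℝ} (hf : Measurable f) :
    L1s N s f ≤ (L1s N 0 f) ^ (1/2 : ℝ) * (L1s N (2 * s) f) ^ (1/2 : ℝ) := by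
  set F : Rn N → ℝ≥0∞ := fun v => ENNReal.ofReal |f v| with hF
  set W : Rn N → ℝ≥0∞ := fun v => ENNReal.ofReal ((1 + ‖v‖ ^ 2) ^ (s / 2)) with hW
  have hFm : Measurable F := hf.abs.ennreal_ofReal
  have hWm : Measurable W := (wt_meas s).ennreal_ofReal
  have key := ENNReal.lintegral_mul_le_Lp_mul_Lq (volume : Measure (Rn N))
    (Real.holderConjugate_iff_eq_conjExponent (by norm_num) |>.mpr (by norm_num) :
      Real.HolderConjugate 2 2)
    ((hFm.pow_const (1/2 : ℝ)).aemeasurable)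
    (((hFm.pow_const (1/2 : ℝ)).mul hWm).aemeasurable)
  have e1 : ∀ v : Rn N,
      ((fun v => F v ^ (1/2 : ℝ)) * fun v => F v ^ (1/2 : ℝ) * W v) v
        = ENNReal.ofReal (|f v| * (1 + ‖v‖ ^ 2) ^ (s / 2)) := by
    intro v
    simp only [Pi.mul_apply]
    rw [← mul_assoc]
    have : F v ^ (1/2 : ℝ) * F v ^ (1/2 : ℝ) = F v := by
      rw [← ENNReal.rpow_add_of_nonneg _ _ (by norm_num) (by norm_num)]
      norm_num
    rw [this]
    simp [hF, hW, ENNReal.ofReal_mul (abs_nonneg (f v))]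
  have e2 : ∀ v : Rn N, (F v ^ (1/2 : ℝ)) ^ (2 : ℝ) = ENNReal.ofReal (|f v| * (1 + ‖v‖ ^ 2) ^ ((0:ℝ) / 2)) := by
    intro v
    rw [← ENNReal.rpow_mul]
    norm_num [hF]
  have e3 : ∀ v : Rn N, (F v ^ (1/2 : ℝ) * W v) ^ (2 : ℝ)
      = ENNReal.ofReal (|f v| * (1 + ‖v‖ ^ 2) ^ ((2 * s) / 2)) := by
    intro v
    rw [ENNReal.mul_rpow_of_nonneg _ _ (by norm_num), ← ENNReal.rpow_mul]
    have hWv : W v ^ (2 : ℝ) = ENNReal.ofReal ((1 + ‖v‖ ^ 2) ^ s) := by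
      simp only [hW]
      rw [ENNReal.ofReal_rpow_of_pos (wt_pos s v), ← Real.rpow_mul (by positivity)]
      norm_num
    rw [hWv]
    simp only [hF, show (1/2:ℝ)*2 = 1 by norm_num, ENNReal.rpow_one, show 2*s/2 = s by ring,
      ENNReal.ofReal_mul (abs_nonneg (f v))]
  unfold L1s
  calc ∫⁻ v : Rn N, ENNReal.ofReal (|f v| * (1 + ‖v‖ ^ 2) ^ (s / 2))
      = ∫⁻ v : Rn N, ((fun v => F v ^ (1/2 : ℝ)) * fun v => F v ^ (1/2 : ℝ) * W v) v := by
        exact (lintegral_congr fun v => (e1 v).symm)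
    _ ≤ (∫⁻ v : Rn N, (F v ^ (1/2 : ℝ)) ^ (2:ℝ)) ^ (1/2 : ℝ) *
        (∫⁻ v : Rn N, (F v ^ (1/2 : ℝ) * W v) ^ (2:ℝ)) ^ (1/2 : ℝ) := key
    _ = _ := by
        rw [lintegral_congr e2, lintegral_congr e3]

end Aux

/-- **Uniform moment bound from linear moment growth plus algebraic `L¹` relaxation**:
if `‖g(t)‖_{L¹_{2s}} ≤ C₀(1+t)` and `‖g(t) - M‖_{L¹} ≤ C₁(1+t)⁻¹`, then
`‖g(t)‖_{L¹_s} ≤ ‖M‖_{L¹_s} + C₁^{1/2} (C₀ + ‖M‖_{L¹_{2s}})^{1/2}` for all `t ≥ 0`;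
in particular `sup_{t ≥ 0} ‖g(t)‖_{L¹_s} < ∞`. -/
theorem uniform_moment_from_growth_and_relaxation
    (N : ℕ) (hN : 1 ≤ N) (s : ℝ) (hs : 2 < s)
    (M : Rn N → ℝ) (hMmeas : Measurable M) (hMpos : ∀ v, 0 ≤ M v)
    (hMfin : L1s N (2 * s) M < ⊤)
    (g : ℝ → Rn N → ℝ) (hgmeas : ∀ t : ℝ, 0 ≤ t → Measurable (g t))
    (hgpos : ∀ t : ℝ, 0 ≤ t → ∀ v, 0 ≤ g t v)
    (C₀ C₁ : ℝ) (hC₀ : 0 < C₀) (hC₁ : 0 < C₁)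
    (hgrow : ∀ t : ℝ, 0 ≤ t → L1s N (2 * s) (g t) ≤ ENNReal.ofReal (C₀ * (1 + t)))
    (hrelax : ∀ t : ℝ, 0 ≤ t →
      L1s N 0 (fun v => g t v - M v) ≤ ENNReal.ofReal (C₁ * (1 + t)⁻¹)) :
    (∀ t : ℝ, 0 ≤ t →
      L1s N s (g t) ≤ L1s N s M +
        ENNReal.ofReal C₁ ^ (1/2 : ℝ) *
          (ENNReal.ofReal C₀ + L1s N (2 * s) M) ^ (1/2 : ℝ)) ∧
    ∃ C : ℝ≥0∞, C < ⊤ ∧ ∀ t : ℝ, 0 ≤ t → L1s N s (g t) ≤ C := by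
  have key : ∀ t : ℝ, 0 ≤ t →
      L1s N s (g t) ≤ L1s N s M +
        ENNReal.ofReal C₁ ^ (1/2 : ℝ) *
          (ENNReal.ofReal C₀ + L1s N (2 * s) M) ^ (1/2 : ℝ) := by
    intro t ht
    have hgt := hgmeas t ht
    set h : Rn N → ℝ := fun v => g t v - M v with hh
    have hhm : Measurable h := hgt.sub hMmeas
    -- triangle inequality
    have step1 : L1s N s (g t) ≤ L1s N s M + L1s N s h := by
      refine L1s_le_add s hMmeas fun v => ?_
      have : g t v = M v + h v := by simp [hh]
      rw [this]; exact abs_add_le _ _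
    -- Cauchy-Schwarz
    have step2 : L1s N s h ≤ (L1s N 0 h) ^ (1/2 : ℝ) * (L1s N (2*s) h) ^ (1/2 : ℝ) :=
      L1s_CS s hhm
    -- bound on the L1_{2s} of h
    have step3 : L1s N (2*s) h ≤ ENNReal.ofReal C₀ * ENNReal.ofReal (1+t) + L1s N (2*s) M := by
      calc L1s N (2*s) h ≤ L1s N (2*s) (g t) + L1s N (2*s) M := by
            refine L1s_le_add (2*s) hgt fun v => ?_
            simpa [hh] using abs_sub (g t v) (M v)
        _ ≤ ENNReal.ofReal C₀ * ENNReal.ofReal (1+t) + L1s N (2*s) M := by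
            gcongr
            rw [← ENNReal.ofReal_mul hC₀.le]
            exact hgrow t ht
    have step4 : L1s N 0 h ≤ ENNReal.ofReal C₁ * ENNReal.ofReal (1+t)⁻¹ := by
      rw [← ENNReal.ofReal_mul hC₁.le]
      exact hrelax t ht
    -- combine
    have hmain : (L1s N 0 h) ^ (1/2 : ℝ) * (L1s N (2*s) h) ^ (1/2 : ℝ)
        ≤ ENNReal.ofReal C₁ ^ (1/2 : ℝ) * (ENNReal.ofReal C₀ + L1s N (2*s) M) ^ (1/2 : ℝ) := by
      calc (L1s N 0 h) ^ (1/2 : ℝ) * (L1s N (2*s) h) ^ (1/2 : ℝ)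
          ≤ (ENNReal.ofReal C₁ * ENNReal.ofReal (1+t)⁻¹) ^ (1/2 : ℝ) *
            (ENNReal.ofReal C₀ * ENNReal.ofReal (1+t) + L1s N (2*s) M) ^ (1/2 : ℝ) := by
            gcongr
        _ = ENNReal.ofReal C₁ ^ (1/2 : ℝ) *
            (ENNReal.ofReal (1+t)⁻¹ * (ENNReal.ofReal C₀ * ENNReal.ofReal (1+t) + L1s N (2*s) M)) ^ (1/2 : ℝ) := by
            rw [ENNReal.mul_rpow_of_nonneg _ _ (by norm_num),
              ENNReal.mul_rpow_of_nonneg _ _ (by norm_num), mul_assoc]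
        _ ≤ ENNReal.ofReal C₁ ^ (1/2 : ℝ) * (ENNReal.ofReal C₀ + L1s N (2*s) M) ^ (1/2 : ℝ) := by
            gcongr
            rw [mul_add]
            gcongr
            · rw [mul_comm (ENNReal.ofReal C₀), ← mul_assoc,
                ← ENNReal.ofReal_mul (by positivity)]
              rw [inv_mul_cancel₀ (by positivity : (1:ℝ) + t ≠ 0)]
              simp
            · nth_rewrite 2 [← one_mul (L1s N (2*s) M)]
              gcongr
              exact ENNReal.ofReal_le_one.mpr (by
                rw [inv_le_one_iff₀]; right; linarith)
    calc L1s N s (g t) ≤ L1s N s M + L1s N s h := step1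
      _ ≤ L1s N s M + ENNReal.ofReal C₁ ^ (1/2 : ℝ) *
          (ENNReal.ofReal C₀ + L1s N (2 * s) M) ^ (1/2 : ℝ) := by
          gcongr
          exact step2.trans hmain
  refine ⟨key, ⟨L1s N s M + ENNReal.ofReal C₁ ^ (1/2 : ℝ) *
      (ENNReal.ofReal C₀ + L1s N (2 * s) M) ^ (1/2 : ℝ), ?_, key⟩⟩
  have h1 : L1s N s M < ⊤ :=
    lt_of_le_of_lt (L1s_mono_exp (by linarith) M) hMfin
  have h2 : ENNReal.ofReal C₁ ^ (1/2 : ℝ) < ⊤ :=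
    ENNReal.rpow_lt_top_of_nonneg (by norm_num) ENNReal.ofReal_ne_top
  have h3 : (ENNReal.ofReal C₀ + L1s N (2 * s) M) ^ (1/2 : ℝ) < ⊤ :=
    ENNReal.rpow_lt_top_of_nonneg (by norm_num)
      (by simp [ENNReal.add_ne_top, hMfin.ne])
  exact ENNReal.add_lt_top.mpr ⟨h1, ENNReal.mul_lt_top h2 h3⟩
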